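/- Let G = (V,E) be a finite simple graph, let k be a natural number, and let lb be a natural number such that θ(G,k) ≥ lb. If u ∈ V is a vertex whose degree d(u) is at most lb − 2, then θ(G,k) = θ(G[V ∖ {u}], k). -/
import Mathlib


open SimpleGraph

/-- `theta G k` is the minimum, over all vertex subsets `S` with `|S| ≤ k`, of the
clique number of the subgraph of `G` induced on the complement of `S`. -/
noncomputable def theta {V : Type*} (G : SimpleGraph V) (k : ℕ) : ℕ :=
  sInf {m | ∃ S : Finset V, S.card ≤ k ∧ (G.induce ((↑S : Set V)ᶜ)).cliqueNum = m}

/-- If `t` is a clique of `G` contained in `A`, then `|t| ≤ ω(G[A])`. -/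
lemma card_le_cliqueNum_induce {α : Type*} [Fintype α] (G : SimpleGraph α) (A : Set α)
    (t : Finset α) (hsub : ↑t ⊆ A) (hc : G.IsClique ↑t) :
    t.card ≤ (G.induce A).cliqueNum := by
  classical
  haveI : Fintype ↥A := Fintype.ofFinite _
  set t' : Finset ↥A := t.subtype (· ∈ A) with ht'
  have hmap : t'.map (Function.Embedding.subtype _) = t :=
    Finset.subtype_map_of_mem (fun x hx => hsub hx)
  have hcard : t'.card = t.card := by rw [← hmap, Finset.card_map]
  have hc' : (G.induce A).IsClique ↑t' := by
    intro x hx y hy hne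
    have hx' : (x : α) ∈ t := Finset.mem_subtype.mp hx
    have hy' : (y : α) ∈ t := Finset.mem_subtype.mp hy
    exact hc hx' hy' (fun hh => hne (Subtype.ext hh))
  calc t.card = t'.card := hcard.symm
    _ ≤ (G.induce A).cliqueNum := @SimpleGraph.IsClique.card_le_cliqueNum _ _ _ t' hc'

/-- There is a clique of `G` inside `A` realizing `ω(G[A])`. -/
lemma exists_clique_cliqueNum_induce {α : Type*} [Fintype α] (G : SimpleGraph α) (A : Set α) :
    ∃ t : Finset α, ↑t ⊆ A ∧ G.IsClique ↑t ∧ t.card = (G.induce A).cliqueNum := by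
  classical
  haveI : Fintype ↥A := Fintype.ofFinite _
  obtain ⟨s, hs⟩ := (G.induce A).exists_isNClique_cliqueNum
  refine ⟨s.map (Function.Embedding.subtype _), ?_, ?_, ?_⟩
  · intro x hx
    simp only [Finset.coe_map, Set.mem_image, Finset.mem_coe] at hx
    obtain ⟨a, _, rfl⟩ := hx
    exact a.2
  · intro x hx y hy hne
    simp only [Finset.coe_map, Set.mem_image, Finset.mem_coe] at hx hy
    obtain ⟨a, ha, rfl⟩ := hx
    obtain ⟨b, hb, rfl⟩ := hy
    exact hs.isClique ha hb (fun hh => hne (congrArg _ hh))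
  · rw [Finset.card_map, hs.card_eq]

/-- A clique containing `u` has at most `d(u) + 1` vertices. -/
lemma clique_card_le_of_mem {α : Type*} [Fintype α] (G : SimpleGraph α) {t : Finset α} {u : α}
    (hc : G.IsClique ↑t) (hu : u ∈ t) : t.card ≤ (G.neighborSet u).ncard + 1 := by
  classical
  have hsub : ↑(t.erase u) ⊆ G.neighborSet u := by
    intro x hx
    rw [Finset.coe_erase] at hx
    exact hc hu hx.1 (fun hh => hx.2 (Set.mem_singleton_iff.mpr hh.symm))
  have h1 : (t.erase u).card ≤ (G.neighborSet u).ncard := by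
    rw [← Set.ncard_coe_finset]
    exact Set.ncard_le_ncard hsub (Set.toFinite _)
  have h2 : t.card = (t.erase u).card + 1 := (Finset.card_erase_add_one hu).symm
  omega

theorem degree_reduction {V : Type*} [Fintype V] (G : SimpleGraph V) (k lb : ℕ)
    (hlb : lb ≤ theta G k) (u : V)
    (h : ((G.neighborSet u).ncard : ℤ) ≤ (lb : ℤ) - 2) :
    theta G k = theta (G.induce ({u}ᶜ : Set V)) k := by
  classical
  set A : Set V := ({u}ᶜ : Set V) with hA
  haveI : Fintype ↥A := Fintype.ofFinite _
  set G' := G.induce A with hG'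
  have hd : (G.neighborSet u).ncard + 2 ≤ lb := by
    have h2 : ((G.neighborSet u).ncard : ℤ) + 2 ≤ (lb : ℤ) := by linarith
    exact_mod_cast h2
  -- nonemptiness of the two sInf sets
  have hne : {m | ∃ S : Finset V, S.card ≤ k ∧ (G.induce ((↑S : Set V)ᶜ)).cliqueNum = m}.Nonempty :=
    ⟨_, ∅, by simp, rfl⟩
  have hne' : {m | ∃ S : Finset ↥A, S.card ≤ k ∧ (G'.induce ((↑S : Set ↥A)ᶜ)).cliqueNum = m}.Nonempty :=
    ⟨_, ∅, by simp, rfl⟩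
  apply le_antisymm
  · -- theta G k ≤ theta G' k
    have hmem := Nat.sInf_mem hne'
    obtain ⟨S', hS'k, hS'c⟩ := hmem
    -- view S' inside V
    set T₀ : Finset V := S'.map (Function.Embedding.subtype _) with hT₀
    have hT₀k : T₀.card ≤ k := by rw [hT₀, Finset.card_map]; exact hS'k
    have h1 : theta G k ≤ (G.induce ((↑T₀ : Set V)ᶜ)).cliqueNum :=
      Nat.sInf_le ⟨T₀, hT₀k, rfl⟩
    obtain ⟨t, htsub, htc, htcard⟩ := exists_clique_cliqueNum_induce G ((↑T₀ : Set V)ᶜ)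
    have hlbt : lb ≤ t.card := by
      rw [htcard]; exact le_trans hlb h1
    have hut : u ∉ t := by
      intro hu
      have := clique_card_le_of_mem G htc hu
      omega
    -- lift t to a clique of G' avoiding S'
    have htA : ↑t ⊆ A := by
      intro x hx
      simp only [hA, Set.mem_compl_iff, Set.mem_singleton_iff]
      rintro rfl; exact hut hx
    set t'' : Finset ↥A := t.subtype (· ∈ A) with ht''
    have hmap : t''.map (Function.Embedding.subtype _) = t :=
      Finset.subtype_map_of_mem (fun x hx => htA hx)
    have hcard'' : t''.card = t.card := by rw [← hmap, Finset.card_map]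
    have hc'' : G'.IsClique ↑t'' := by
      intro x hx y hy hne2
      have hx' : (x : V) ∈ t := Finset.mem_subtype.mp hx
      have hy' : (y : V) ∈ t := Finset.mem_subtype.mp hy
      exact htc hx' hy' (fun hh => hne2 (Subtype.ext hh))
    have hsub'' : ↑t'' ⊆ ((↑S' : Set ↥A)ᶜ) := by
      intro a ha
      have ha' : (a : V) ∈ t := Finset.mem_subtype.mp ha
      have : (a : V) ∈ ((↑T₀ : Set V)ᶜ) := htsub ha'
      simp only [Set.mem_compl_iff, Finset.mem_coe]
      intro haS'
      apply this
      rw [hT₀]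
      simp only [Finset.coe_map, Set.mem_image, Finset.mem_coe]
      exact ⟨a, haS', rfl⟩
    have h2 : t''.card ≤ (G'.induce ((↑S' : Set ↥A)ᶜ)).cliqueNum :=
      card_le_cliqueNum_induce G' _ t'' hsub'' hc''
    calc theta G k ≤ t.card := le_trans h1 htcard.ge
      _ = t''.card := hcard''.symm
      _ ≤ (G'.induce ((↑S' : Set ↥A)ᶜ)).cliqueNum := h2
      _ = theta G' k := hS'c
  · -- theta G' k ≤ theta G k
    have hmem := Nat.sInf_mem hne
    obtain ⟨S, hSk, hSc⟩ := hmem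
    set S' : Finset ↥A := (S.erase u).subtype (· ∈ A) with hS'
    have hS'k : S'.card ≤ k := by
      calc S'.card ≤ (S.erase u).card := by
            rw [hS']
            calc ((S.erase u).subtype (· ∈ A)).card
                = (((S.erase u).subtype (· ∈ A)).map (Function.Embedding.subtype _)).card :=
                  (Finset.card_map _).symm
              _ ≤ (S.erase u).card := Finset.card_le_card (by
                  intro x hx
                  simp only [Finset.mem_map, Finset.mem_subtype] at hx
                  obtain ⟨a, ha, rfl⟩ := hx
                  exact ha)
        _ ≤ S.card := Finset.card_erase_le
        _ ≤ k := hSk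
    have h1 : theta G' k ≤ (G'.induce ((↑S' : Set ↥A)ᶜ)).cliqueNum :=
      Nat.sInf_le ⟨S', hS'k, rfl⟩
    obtain ⟨t', ht'sub, ht'c, ht'card⟩ := exists_clique_cliqueNum_induce G' ((↑S' : Set ↥A)ᶜ)
    set t : Finset V := t'.map (Function.Embedding.subtype _) with ht
    have htcard : t.card = t'.card := Finset.card_map _
    have htc : G.IsClique ↑t := by
      intro x hx y hy hne2
      simp only [ht, Finset.coe_map, Set.mem_image, Finset.mem_coe] at hx hy
      obtain ⟨a, ha, rfl⟩ := hx
      obtain ⟨b, hb, rfl⟩ := hy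
      exact ht'c ha hb (fun hh => hne2 (congrArg _ hh))
    have htsub : ↑t ⊆ ((↑S : Set V)ᶜ) := by
      intro x hx
      simp only [ht, Finset.coe_map, Set.mem_image, Finset.mem_coe] at hx
      obtain ⟨a, ha, rfl⟩ := hx
      simp only [Set.mem_compl_iff, Finset.mem_coe]
      intro hxS
      have hane : (a : V) ≠ u := fun hh => a.2 (Set.mem_singleton_iff.mpr hh)
      have haerase : (a : V) ∈ S.erase u := Finset.mem_erase.mpr ⟨hane, hxS⟩
      have : a ∈ S' := by
        rw [hS']
        exact Finset.mem_subtype.mpr haerase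
      exact (ht'sub ha) this
    have h2 : t.card ≤ (G.induce ((↑S : Set V)ᶜ)).cliqueNum :=
      card_le_cliqueNum_induce G _ t htsub htc
    calc theta G' k ≤ t'.card := le_trans h1 ht'card.ge
      _ = t.card := htcard.symm
      _ ≤ (G.induce ((↑S : Set V)ᶜ)).cliqueNum := h2
      _ = theta G k := hSc
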